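/- Detailed fluctuation relation (classical case): with forward probability P^F[ξ], backward probability P^B[ξ] (defined by running the reversed permutations from the final system pmf p' and product reference environment ∏_j r'_j, where r'_j is the final marginal of environment site j), and local marginals P^F_j, P^B_j obtained by summing over all variables except those of the j-th system-environment pair, one has P^F[ξ] e^{-Δι_cl(ξ)} / ∏_j P^F_j[ξ_j] = P^B[ξ] / ∏_j P^B_j[ξ_j], for every trajectory ξ with P^F[ξ] > 0. -/

import Mathlib

/-- Marginal of a joint pmf on a finite product space at site `j`. -/
noncomputable def marg {N : ℕ} {X : Fin N → Type*}
    [∀ j, Fintype (X j)] [∀ j, DecidableEq (X j)]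
    (p : (∀ j, X j) → ℝ) (j : Fin N) (a : X j) : ℝ :=
  ∑ x : ∀ i, X i, if x j = a then p x else 0

section Setup

variable {N : ℕ} {S E : Fin N → Type*}
  [∀ j, Fintype (S j)] [∀ j, DecidableEq (S j)]
  [∀ j, Fintype (E j)] [∀ j, DecidableEq (E j)]

/-- Forward path probability P^F[s,n,s',n']: initial weight p(s)∏_j r_j(n_j), with the
deterministic local permutation dynamics π_j on each system-environment pair. -/
noncomputable def PF (p : (∀ j, S j) → ℝ) (r : ∀ j, E j → ℝ)
    (π : ∀ j, (S j × E j) ≃ (S j × E j))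
    (s : ∀ j, S j) (n : ∀ j, E j) (s' : ∀ j, S j) (n' : ∀ j, E j) : ℝ :=
  if ∀ j, π j (s j, n j) = (s' j, n' j) then p s * ∏ j, r j (n j) else 0

/-- Final system pmf p'. -/
noncomputable def finalSys (p : (∀ j, S j) → ℝ) (r : ∀ j, E j → ℝ)
    (π : ∀ j, (S j × E j) ≃ (S j × E j)) (s' : ∀ j, S j) : ℝ :=
  ∑ s : ∀ j, S j, ∑ n : ∀ j, E j,
    if ∀ j, (π j (s j, n j)).1 = s' j then p s * ∏ j, r j (n j) else 0

/-- Final marginal pmf r'_j of the j-th environment site. -/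
noncomputable def finalEnv (p : (∀ j, S j) → ℝ) (r : ∀ j, E j → ℝ)
    (π : ∀ j, (S j × E j) ≃ (S j × E j)) (j : Fin N) (m : E j) : ℝ :=
  ∑ s : ∀ j, S j, ∑ n : ∀ j, E j,
    if (π j (s j, n j)).2 = m then p s * ∏ j, r j (n j) else 0

/-- Backward path probability P^B[s,n,s',n']: the reversed permutations applied to the
final system pmf p' and the product reference environment ∏_j r'_j. -/
noncomputable def PB (p : (∀ j, S j) → ℝ) (r : ∀ j, E j → ℝ)
    (π : ∀ j, (S j × E j) ≃ (S j × E j))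
    (s : ∀ j, S j) (n : ∀ j, E j) (s' : ∀ j, S j) (n' : ∀ j, E j) : ℝ :=
  if ∀ j, (π j).symm (s' j, n' j) = (s j, n j) then
    finalSys p r π s' * ∏ j, finalEnv p r π j (n' j)
  else 0

/-- Local marginal P^F_j of the forward path probability (sum over all variables except
those of the j-th system-environment pair). -/
noncomputable def PFj (p : (∀ j, S j) → ℝ) (r : ∀ j, E j → ℝ)
    (π : ∀ j, (S j × E j) ≃ (S j × E j)) (j : Fin N)
    (a : S j) (b : E j) (a' : S j) (b' : E j) : ℝ :=
  ∑ s : ∀ j, S j, ∑ n : ∀ j, E j, ∑ s' : ∀ j, S j, ∑ n' : ∀ j, E j,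
    if s j = a ∧ n j = b ∧ s' j = a' ∧ n' j = b' then PF p r π s n s' n' else 0

/-- Local marginal P^B_j of the backward path probability. -/
noncomputable def PBj (p : (∀ j, S j) → ℝ) (r : ∀ j, E j → ℝ)
    (π : ∀ j, (S j × E j) ≃ (S j × E j)) (j : Fin N)
    (a : S j) (b : E j) (a' : S j) (b' : E j) : ℝ :=
  ∑ s : ∀ j, S j, ∑ n : ∀ j, E j, ∑ s' : ∀ j, S j, ∑ n' : ∀ j, E j,
    if s j = a ∧ n j = b ∧ s' j = a' ∧ n' j = b' then PB p r π s n s' n' else 0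


lemma sum_prod_one {N : ℕ} {X : Fin N → Type*} [∀ i, Fintype (X i)] [∀ i, DecidableEq (X i)]
    (r : ∀ i, X i → ℝ) (hr : ∀ i, ∑ m, r i m = 1) :
    ∑ x : ∀ i, X i, ∏ i, r i (x i) = 1 := by
  have h := Finset.prod_univ_sum (fun i => (Finset.univ : Finset (X i))) (fun i m => r i m)
  rw [Fintype.piFinset_univ] at h
  rw [← h]
  simp [hr]

lemma marg_prod {N : ℕ} {X : Fin N → Type*} [∀ i, Fintype (X i)] [∀ i, DecidableEq (X i)]
    (r : ∀ i, X i → ℝ) (hr : ∀ i, ∑ m, r i m = 1) (j : Fin N) (b : X j) :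
    ∑ x : ∀ i, X i, (if x j = b then ∏ i, r i (x i) else 0) = r j b := by
  set g : ∀ i, X i → ℝ := Function.update r j (fun m => if m = b then r j m else 0) with hg
  have hgj : g j = fun m => if m = b then r j m else 0 := Function.update_self _ _ _
  have hgne : ∀ i, i ≠ j → g i = r i := fun i hi => Function.update_of_ne hi _ _
  have key : ∀ x : ∀ i, X i, (if x j = b then ∏ i, r i (x i) else 0) = ∏ i, g i (x i) := by
    intro x
    rw [← Finset.mul_prod_erase Finset.univ (fun i => g i (x i)) (Finset.mem_univ j),
        ← Finset.mul_prod_erase Finset.univ (fun i => r i (x i)) (Finset.mem_univ j)]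
    have hprod : ∏ i ∈ Finset.univ.erase j, g i (x i) = ∏ i ∈ Finset.univ.erase j, r i (x i) :=
      Finset.prod_congr rfl fun i hi => by rw [hgne i (Finset.ne_of_mem_erase hi)]
    rw [hprod, hgj]
    by_cases h : x j = b <;> simp [h]
  simp_rw [key]
  have h := Finset.prod_univ_sum (fun i => (Finset.univ : Finset (X i))) (fun i m => g i m)
  rw [Fintype.piFinset_univ] at h
  rw [← h, ← Finset.mul_prod_erase Finset.univ (fun i => ∑ m, g i m) (Finset.mem_univ j)]
  have : ∏ i ∈ Finset.univ.erase j, (∑ m, g i m) = 1 := by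
    apply Finset.prod_eq_one
    intro i hi
    rw [hgne i (Finset.ne_of_mem_erase hi)]
    exact hr i
  rw [this, hgj, mul_one]
  simp [Finset.sum_ite_eq' Finset.univ b (r j)]
lemma sum4_comm {α β γ δ : Type*} [Fintype α] [Fintype β] [Fintype γ] [Fintype δ]
    (F : α → β → γ → δ → ℝ) :
    (∑ a, ∑ b, ∑ c, ∑ d, F a b c d) = ∑ c, ∑ d, ∑ a, ∑ b, F a b c d := by
  trans (∑ x : α × β, ∑ y : γ × δ, F x.1 x.2 y.1 y.2)
  · simp only [Fintype.sum_prod_type]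
  · rw [Finset.sum_comm]
    simp only [Fintype.sum_prod_type]

lemma marg_pos {N : ℕ} {X : Fin N → Type*} [∀ i, Fintype (X i)] [∀ i, DecidableEq (X i)]
    (p : (∀ i, X i) → ℝ) (hp : ∀ x, 0 ≤ p x) (x0 : ∀ i, X i) (h0 : 0 < p x0) (j : Fin N) :
    0 < marg p j (x0 j) := by
  apply Finset.sum_pos' (fun x _ => by by_cases h : x j = x0 j <;> simp [h, hp x]) ⟨x0, Finset.mem_univ _, by simp [h0]⟩

-- marg of factored pmf: ∑ s ∑ n, if s j = a ∧ n j = b then p s * q n else 0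
lemma double_marg {N : ℕ} {X Y : Fin N → Type*}
    [∀ i, Fintype (X i)] [∀ i, DecidableEq (X i)] [∀ i, Fintype (Y i)] [∀ i, DecidableEq (Y i)]
    (p : (∀ i, X i) → ℝ) (q : (∀ i, Y i) → ℝ) (j : Fin N) (a : X j) (b : Y j) :
    (∑ x : ∀ i, X i, ∑ y : ∀ i, Y i, if x j = a ∧ y j = b then p x * q y else 0)
      = marg p j a * marg q j b := by
  unfold marg
  rw [Finset.sum_mul_sum]
  refine Finset.sum_congr rfl fun x _ => Finset.sum_congr rfl fun y _ => ?_
  by_cases h1 : x j = a <;> by_cases h2 : y j = b <;> simp [h1, h2]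

lemma PFj_eq (p : (∀ j, S j) → ℝ) (r : ∀ j, E j → ℝ)
    (π : ∀ j, (S j × E j) ≃ (S j × E j)) (j : Fin N)
    (a : S j) (b : E j) (a' : S j) (b' : E j) (hπ : π j (a, b) = (a', b')) :
    PFj p r π j a b a' b' = marg p j a * marg (fun n : ∀ i, E i => ∏ i, r i (n i)) j b := by
  unfold PFj
  have step : ∀ (s : ∀ i, S i) (n : ∀ i, E i),
      (∑ s' : ∀ i, S i, ∑ n' : ∀ i, E i,
        if s j = a ∧ n j = b ∧ s' j = a' ∧ n' j = b' then PF p r π s n s' n' else 0)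
      = if s j = a ∧ n j = b then p s * ∏ i, r i (n i) else 0 := by
    intro s n
    set s0 : ∀ i, S i := fun i => (π i (s i, n i)).1 with hs0
    set n0 : ∀ i, E i := fun i => (π i (s i, n i)).2 with hn0
    rw [Fintype.sum_eq_single s0 (fun s' hs' => ?_)]
    · rw [Fintype.sum_eq_single n0 (fun n' hn' => ?_)]
      · have hdyn : ∀ i, π i (s i, n i) = (s0 i, n0 i) := fun i => (Prod.mk.eta).symm
        rw [PF, if_pos hdyn]
        by_cases h1 : s j = a
        · by_cases h2 : n j = b
          · have hπj : π j (s j, n j) = (a', b') := by rw [h1, h2]; exact hπ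
            have e1 : s0 j = a' := by rw [hs0]; simp [hπj]
            have e2 : n0 j = b' := by rw [hn0]; simp [hπj]
            simp [h1, h2, e1, e2]
          · simp [h2]
        · simp [h1]
      · have hPF : PF p r π s n s0 n' = 0 := by
          rw [PF, if_neg]
          intro hall
          apply hn'
          funext i
          have := congrArg Prod.snd (hall i)
          simpa [hn0] using this.symm
        simp [hPF]
    · have hPF : ∀ n' : ∀ i, E i, PF p r π s n s' n' = 0 := by
        intro n'
        rw [PF, if_neg]
        intro hall
        apply hs'
        funext i
        have := congrArg Prod.fst (hall i)
        simpa [hs0] using this.symm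
      simp [hPF]
  simp_rw [step]
  exact double_marg p (fun n : ∀ i, E i => ∏ i, r i (n i)) j a b

lemma PBj_eq (p : (∀ j, S j) → ℝ) (r : ∀ j, E j → ℝ)
    (π : ∀ j, (S j × E j) ≃ (S j × E j)) (j : Fin N)
    (a : S j) (b : E j) (a' : S j) (b' : E j) (hπ : (π j).symm (a', b') = (a, b)) :
    PBj p r π j a b a' b' = marg (finalSys p r π) j a'
      * marg (fun n' : ∀ i, E i => ∏ i, finalEnv p r π i (n' i)) j b' := by
  unfold PBj
  rw [sum4_comm]
  have step : ∀ (s' : ∀ i, S i) (n' : ∀ i, E i),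
      (∑ s : ∀ i, S i, ∑ n : ∀ i, E i,
        if s j = a ∧ n j = b ∧ s' j = a' ∧ n' j = b' then PB p r π s n s' n' else 0)
      = if s' j = a' ∧ n' j = b' then
          finalSys p r π s' * ∏ i, finalEnv p r π i (n' i) else 0 := by
    intro s' n'
    set s0 : ∀ i, S i := fun i => ((π i).symm (s' i, n' i)).1 with hs0
    set n0 : ∀ i, E i := fun i => ((π i).symm (s' i, n' i)).2 with hn0
    rw [Fintype.sum_eq_single s0 (fun s hs => ?_)]
    · rw [Fintype.sum_eq_single n0 (fun n hn => ?_)]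
      · have hdyn : ∀ i, (π i).symm (s' i, n' i) = (s0 i, n0 i) := fun i => (Prod.mk.eta).symm
        rw [PB, if_pos hdyn]
        by_cases h1 : s' j = a'
        · by_cases h2 : n' j = b'
          · have hπj : (π j).symm (s' j, n' j) = (a, b) := by rw [h1, h2]; exact hπ
            have e1 : s0 j = a := by rw [hs0]; simp [hπj]
            have e2 : n0 j = b := by rw [hn0]; simp [hπj]
            simp [h1, h2, e1, e2]
          · simp [h2]
        · simp [h1]
      · have hPB : PB p r π s0 n s' n' = 0 := by
          rw [PB, if_neg]
          intro hall
          apply hn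
          funext i
          have := congrArg Prod.snd (hall i)
          simpa [hn0] using this.symm
        simp [hPB]
    · have hPB : ∀ n : ∀ i, E i, PB p r π s n s' n' = 0 := by
        intro n
        rw [PB, if_neg]
        intro hall
        apply hs
        funext i
        have := congrArg Prod.fst (hall i)
        simpa [hs0] using this.symm
      simp [hPB]
  simp_rw [step]
  exact double_marg (finalSys p r π) (fun n' : ∀ i, E i => ∏ i, finalEnv p r π i (n' i)) j a' b'

lemma marg_prod' {N : ℕ} {X : Fin N → Type*} [∀ i, Fintype (X i)] [∀ i, DecidableEq (X i)]
    (r : ∀ i, X i → ℝ) (hr : ∀ i, ∑ m, r i m = 1) (j : Fin N) (b : X j) :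
    marg (fun x : ∀ i, X i => ∏ i, r i (x i)) j b = r j b := by
  unfold marg; exact marg_prod r hr j b

lemma finalSys_nonneg (p : (∀ j, S j) → ℝ) (r : ∀ j, E j → ℝ)
    (hp : ∀ s, 0 < p s) (hr : ∀ j n, 0 < r j n)
    (π : ∀ j, (S j × E j) ≃ (S j × E j)) (s' : ∀ j, S j) :
    0 ≤ finalSys p r π s' := by
  refine Finset.sum_nonneg fun x _ => Finset.sum_nonneg fun y _ => ?_
  have : (0:ℝ) ≤ p x * ∏ j, r j (y j) := by
    have := hp x
    have : (0:ℝ) < ∏ j, r j (y j) := Finset.prod_pos fun j _ => hr j (y j)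
    positivity
  split <;> simp [this]

lemma finalEnv_sum_one (p : (∀ j, S j) → ℝ) (r : ∀ j, E j → ℝ)
    (hpsum : ∑ s, p s = 1) (hrsum : ∀ j, ∑ n, r j n = 1)
    (π : ∀ j, (S j × E j) ≃ (S j × E j)) (j : Fin N) :
    ∑ m, finalEnv p r π j m = 1 := by
  unfold finalEnv
  rw [Finset.sum_comm]
  have step : ∀ s : ∀ i, S i,
      (∑ m : E j, ∑ n : ∀ i, E i,
        if (π j (s j, n j)).2 = m then p s * ∏ i, r i (n i) else 0)
      = ∑ n : ∀ i, E i, p s * ∏ i, r i (n i) := by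
    intro s
    rw [Finset.sum_comm]
    refine Finset.sum_congr rfl fun n _ => ?_
    rw [Finset.sum_ite_eq Finset.univ ((π j (s j, n j)).2) (fun _ => p s * ∏ i, r i (n i))]
    simp
  simp_rw [step]
  rw [← Finset.sum_mul_sum, hpsum, sum_prod_one r hrsum, mul_one]

/-- Detailed fluctuation relation for the total classical correlation:
P^F[ξ] e^{-Δι_cl(ξ)} / ∏_j P^F_j[ξ_j] = P^B[ξ] / ∏_j P^B_j[ξ_j] on every trajectory ξ
with P^F[ξ] > 0. -/
theorem stmt9
    (p : (∀ j, S j) → ℝ) (r : ∀ j, E j → ℝ)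
    (hp : ∀ s, 0 < p s) (hpsum : ∑ s, p s = 1)
    (hr : ∀ j n, 0 < r j n) (hrsum : ∀ j, ∑ n, r j n = 1)
    (π : ∀ j, (S j × E j) ≃ (S j × E j))
    (s : ∀ j, S j) (n : ∀ j, E j) (s' : ∀ j, S j) (n' : ∀ j, E j)
    (hpos : 0 < PF p r π s n s' n') :
    PF p r π s n s' n' *
        Real.exp (-(Real.log (p s) - (∑ j, Real.log (marg p j (s j)))
          - (Real.log (finalSys p r π s')
            - ∑ j, Real.log (marg (finalSys p r π) j (s' j))))) /
      (∏ j, PFj p r π j (s j) (n j) (s' j) (n' j))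
    = PB p r π s n s' n' / ∏ j, PBj p r π j (s j) (n j) (s' j) (n' j) := by
  -- basic positivity and the forward condition
  have hfwd : ∀ i, π i (s i, n i) = (s' i, n' i) := by
    by_contra h
    rw [PF, if_neg h] at hpos
    exact lt_irrefl _ hpos
  have hbwd : ∀ i, (π i).symm (s' i, n' i) = (s i, n i) := fun i => by
    rw [← hfwd i]; exact (π i).symm_apply_apply _
  have hwpos : ∀ (x : ∀ i, S i) (y : ∀ i, E i), (0:ℝ) < p x * ∏ i, r i (y i) :=
    fun x y => mul_pos (hp x) (Finset.prod_pos fun i _ => hr i (y i))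
  have hA : 0 < p s := hp s
  have hB : (0:ℝ) < ∏ i, r i (n i) := Finset.prod_pos fun i _ => hr i (n i)
  have hA' : 0 < finalSys p r π s' := by
    unfold finalSys
    refine Finset.sum_pos' (fun x _ => Finset.sum_nonneg fun y _ => ?_)
      ⟨s, Finset.mem_univ _, ?_⟩
    · split
      · exact (hwpos x y).le
      · exact le_rfl
    · refine Finset.sum_pos' (fun y _ => ?_) ⟨n, Finset.mem_univ _, ?_⟩
      · split
        · exact (hwpos s y).le
        · exact le_rfl
      · rw [if_pos (fun i => by rw [hfwd i])]
        exact hwpos s n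
  have hr' : ∀ (j : Fin N) (m : E j),
      (∃ (x : ∀ i, S i) (y : ∀ i, E i), (π j (x j, y j)).2 = m) → 0 < finalEnv p r π j m := by
    intro j m ⟨x, y, hxy⟩
    unfold finalEnv
    refine Finset.sum_pos' (fun u _ => Finset.sum_nonneg fun v _ => ?_)
      ⟨x, Finset.mem_univ _, ?_⟩
    · split
      · exact (hwpos u v).le
      · exact le_rfl
    · refine Finset.sum_pos' (fun v _ => ?_) ⟨y, Finset.mem_univ _, ?_⟩
      · split
        · exact (hwpos x v).le
        · exact le_rfl
      · rw [if_pos hxy]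
        exact hwpos x y
  have hr'nn : ∀ (j : Fin N) (m : E j), 0 ≤ finalEnv p r π j m := by
    intro j m
    unfold finalEnv
    refine Finset.sum_nonneg fun u _ => Finset.sum_nonneg fun v _ => ?_
    split
    · exact (hwpos u v).le
    · exact le_rfl
  have hrn' : ∀ j : Fin N, 0 < finalEnv p r π j (n' j) :=
    fun j => hr' j (n' j) ⟨s, n, by rw [hfwd j]⟩
  have hB' : (0:ℝ) < ∏ i, finalEnv p r π i (n' i) :=
    Finset.prod_pos fun i _ => hrn' i
  have hMj : ∀ j : Fin N, 0 < marg p j (s j) :=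
    fun j => marg_pos p (fun x => (hp x).le) s (hp s) j
  have hM : (0:ℝ) < ∏ j, marg p j (s j) := Finset.prod_pos fun j _ => hMj j
  have hM'j : ∀ j : Fin N, 0 < marg (finalSys p r π) j (s' j) :=
    fun j => marg_pos (finalSys p r π) (finalSys_nonneg p r hp hr π) s' hA' j
  have hM' : (0:ℝ) < ∏ j, marg (finalSys p r π) j (s' j) :=
    Finset.prod_pos fun j _ => hM'j j
  have r'sum : ∀ j, ∑ m, finalEnv p r π j m = 1 :=
    finalEnv_sum_one p r hpsum hrsum π
  -- values of the path probabilities and their marginals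
  have ePF : PF p r π s n s' n' = p s * ∏ i, r i (n i) := by rw [PF, if_pos hfwd]
  have ePB : PB p r π s n s' n'
      = finalSys p r π s' * ∏ i, finalEnv p r π i (n' i) := by rw [PB, if_pos hbwd]
  have ePFj : ∀ j : Fin N, PFj p r π j (s j) (n j) (s' j) (n' j)
      = marg p j (s j) * r j (n j) := fun j => by
    rw [PFj_eq p r π j _ _ _ _ (hfwd j), marg_prod' r hrsum]
  have ePBj : ∀ j : Fin N, PBj p r π j (s j) (n j) (s' j) (n' j)
      = marg (finalSys p r π) j (s' j) * finalEnv p r π j (n' j) := fun j => by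
    rw [PBj_eq p r π j _ _ _ _ (hbwd j), marg_prod' (finalEnv p r π) r'sum]
  -- log sums
  have hlogM : ∑ j, Real.log (marg p j (s j)) = Real.log (∏ j, marg p j (s j)) :=
    (Real.log_prod fun j _ => (hMj j).ne').symm
  have hlogM' : ∑ j, Real.log (marg (finalSys p r π) j (s' j))
      = Real.log (∏ j, marg (finalSys p r π) j (s' j)) :=
    (Real.log_prod fun j _ => (hM'j j).ne').symm
  have hexparg : -(Real.log (p s) - Real.log (∏ j, marg p j (s j))
      - (Real.log (finalSys p r π s') - Real.log (∏ j, marg (finalSys p r π) j (s' j))))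
      = Real.log (finalSys p r π s' * (∏ j, marg p j (s j))
          / (p s * ∏ j, marg (finalSys p r π) j (s' j))) := by
    rw [Real.log_div (by positivity) (by positivity),
        Real.log_mul hA'.ne' hM.ne', Real.log_mul hA.ne' hM'.ne']
    ring
  rw [ePF, ePB, hlogM, hlogM', hexparg, Real.exp_log (by positivity)]
  rw [Finset.prod_congr rfl fun j _ => ePFj j, Finset.prod_congr rfl fun j _ => ePBj j]
  rw [Finset.prod_mul_distrib, Finset.prod_mul_distrib]
  have hrB : (0:ℝ) < ∏ j, r j (n j) := hB
  field_simp

end Setup
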